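/- arXiv:1606.01974 — 6 statements merged into one kernel-verified Lean document; each statement's English description precedes it below -/
import Mathlib

section
/- Let F be a field and D a division ring containing F in its center and finite-dimensional over F, and let L be an F-basis of D. If L is semi-multiplicative (for all u, v ∈ L there exist c ∈ F and ℓ ∈ L with u·v = c·ℓ), then L satisfies condition (2.1): for all f, w, z ∈ L one has f*(w⁻¹·z) = w*(z·f⁻¹). -/
/-- Condition (2.1) for a semi-multiplicative basis of a division algebra:
if `L` is a semi-multiplicative `F`-basis of a finite-dimensional division
`F`-algebra `D`, then `f*(w⁻¹·z) = w*(z·f⁻¹)` for all `f, w, z ∈ L`. -/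
theorem semiMultiplicative_satisfies_2_1
    (F : Type*) [Field F] (D : Type*) [DivisionRing D] [Algebra F D]
    [FiniteDimensional F D] {ι : Type*} (B : Module.Basis ι F D)
    (hsm : ∀ u v : ι, ∃ c : F, ∃ l : ι, B u * B v = c • B l) :
    ∀ f w z : ι, B.coord f ((B w)⁻¹ * B z) = B.coord w (B z * (B f)⁻¹) := by
  classical
  haveI : Fintype ι := FiniteDimensional.fintypeBasisIndex B
  choose c σ hcσ using hsm
  have hB0 : ∀ i : ι, B i ≠ 0 := fun i => B.ne_zero i
  have hc0 : ∀ u v, c u v ≠ 0 := by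
    intro u v h
    have h2 := hcσ u v
    rw [h, zero_smul] at h2
    exact mul_ne_zero (hB0 u) (hB0 v) h2
  -- proportional basis elements have the same index
  have hprop : ∀ (g g' : ι) (k : F), B g = k • B g' → g = g' := by
    intro g g' k h
    by_contra hne
    have h1 : B.repr (B g) g = 1 := by simp [B.repr_self]
    rw [h, map_smul] at h1
    simp [B.repr_self, Finsupp.single_apply, Ne.symm hne] at h1
  -- injectivity of left multiplication index map
  have hinjL : ∀ w : ι, Function.Injective (fun g => σ w g) := by
    intro w g g' h
    simp only at h
    have h1 := hcσ w g
    have h2 := hcσ w g'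
    rw [h] at h1
    have h3 : B w * B g = B w * ((c w g * (c w g')⁻¹) • B g') := by
      rw [mul_smul_comm, h2, smul_smul, mul_assoc, inv_mul_cancel₀ (hc0 w g'), mul_one, h1]
    exact hprop g g' _ (mul_left_cancel₀ (hB0 w) h3)
  have hinjR : ∀ f : ι, Function.Injective (fun g => σ g f) := by
    intro f g g' h
    simp only at h
    have h1 := hcσ g f
    have h2 := hcσ g' f
    rw [h] at h1
    have h3 : B g * B f = ((c g f * (c g' f)⁻¹) • B g') * B f := by
      rw [smul_mul_assoc, h2, smul_smul, mul_assoc, inv_mul_cancel₀ (hc0 g' f), mul_one, h1]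
    exact hprop g g' _ (mul_right_cancel₀ (hB0 f) h3)
  -- key computation
  have key : ∀ (τ : ι → ι), Function.Injective τ → ∀ (a : ι → F) (z f : ι),
      (∑ g, a g • B (τ g)) = B z → a f = if τ f = z then 1 else 0 := by
    intro τ hτ a z f h
    have h1 := congrArg (fun y => B.repr y (τ f)) h
    simp only [map_sum, map_smul, B.repr_self, Finsupp.smul_single, smul_eq_mul, mul_one,
      Finsupp.coe_finset_sum, Finset.sum_apply] at h1
    rw [Finset.sum_eq_single f (fun g _ hg => Finsupp.single_eq_of_ne' (fun hh => hg (hτ hh)))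
        (fun hf => absurd (Finset.mem_univ f) hf), Finsupp.single_eq_same] at h1
    rw [h1]
    by_cases hz : τ f = z
    · rw [hz, Finsupp.single_eq_same, if_pos rfl]
    · rw [Finsupp.single_eq_of_ne' (Ne.symm hz), if_neg hz]
  intro f w z
  set x : D := (B w)⁻¹ * B z with hxdef
  set y : D := B z * (B f)⁻¹ with hydef
  have hx : B w * x = B z := mul_inv_cancel_left₀ (hB0 w) _
  have hy : y * B f = B z := inv_mul_cancel_right₀ (hB0 f) _
  have hxe : (∑ g, (B.repr x g * c w g) • B (σ w g)) = B z := by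
    calc (∑ g, (B.repr x g * c w g) • B (σ w g))
        = ∑ g, B.repr x g • (B w * B g) := by
          refine Finset.sum_congr rfl fun g _ => ?_
          rw [hcσ w g, smul_smul]
      _ = B w * ∑ g, B.repr x g • B g := by
          rw [Finset.mul_sum]
          exact Finset.sum_congr rfl fun g _ => (mul_smul_comm _ _ _).symm
      _ = B z := by rw [B.sum_repr x]; exact hx
  have hye : (∑ g, (B.repr y g * c g f) • B (σ g f)) = B z := by
    calc (∑ g, (B.repr y g * c g f) • B (σ g f))
        = ∑ g, B.repr y g • (B g * B f) := by
          refine Finset.sum_congr rfl fun g _ => ?_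
          rw [hcσ g f, smul_smul]
      _ = (∑ g, B.repr y g • B g) * B f := by
          rw [Finset.sum_mul]
          exact Finset.sum_congr rfl fun g _ => (smul_mul_assoc _ _ _).symm
      _ = B z := by rw [B.sum_repr y]; exact hy
  have k1 := key (fun g => σ w g) (hinjL w) (fun g => B.repr x g * c w g) z f hxe
  have k2 := key (fun g => σ g f) (hinjR f) (fun g => B.repr y g * c g f) z w hye
  have : B.repr x f * c w f = B.repr y w * c w f := by rw [k1, k2]
  have h5 := mul_right_cancel₀ (hc0 w f) this
  simpa [B.coord_apply] using h5
end

section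
/- Let F be a field and D a division ring containing F in its center and finite-dimensional over F, and let L be an F-basis of D such that the family of inverses (w⁻¹)_{w ∈ L} is also an F-basis of D. If L is semi-multiplicative (for all u, v ∈ L there exist c ∈ F and ℓ ∈ L with u·v = c·ℓ), then L satisfies condition (2.2): f*(z·w) = (w⁻¹)*(f⁻¹·z) for all f, w, z ∈ L, and condition (2.3): z*(w·f) = (w⁻¹)*(f·z⁻¹) for all f, w, z ∈ L. -/
/-- Conditions (2.2) and (2.3) for a semi-multiplicative basis of a division
algebra: if `L` is a semi-multiplicative `F`-basis of a finite-dimensional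
division `F`-algebra `D`, whose family of inverses is again an `F`-basis, then
`f*(z·w) = (w⁻¹)*(f⁻¹·z)` and `z*(w·f) = (w⁻¹)*(f·z⁻¹)` for all `f, w, z ∈ L`. -/
theorem semiMultiplicative_satisfies_2_2_and_2_3
    (F : Type*) [Field F] (D : Type*) [DivisionRing D] [Algebra F D]
    [FiniteDimensional F D] {ι : Type*} (B : Module.Basis ι F D)
    (B' : Module.Basis ι F D) (hB' : ∀ w : ι, B' w = (B w)⁻¹)
    (hsm : ∀ u v : ι, ∃ c : F, ∃ l : ι, B u * B v = c • B l) :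
    (∀ f w z : ι, B.coord f (B z * B w) = B'.coord w ((B f)⁻¹ * B z)) ∧
    (∀ f w z : ι, B.coord z (B w * B f) = B'.coord w (B f * (B z)⁻¹)) := by
  classical
  haveI : Fintype ι := FiniteDimensional.fintypeBasisIndex B
  choose c l hcl using hsm
  have hBne : ∀ u : ι, B u ≠ 0 := fun u => B.ne_zero u
  have hcne : ∀ u v, c u v ≠ 0 := by
    intro u v h
    have h2 := hcl u v
    rw [h, zero_smul] at h2
    exact mul_ne_zero (hBne u) (hBne v) h2
  have scal : ∀ (w1 w2 : ι) (t : F), B w1 = t • B w2 → w1 = w2 := by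
    intro w1 w2 t h
    have h2 := congrArg B.repr h
    rw [B.repr_self, map_smul, B.repr_self, Finsupp.smul_single, smul_eq_mul,
      mul_one] at h2
    rcases (Finsupp.single_eq_single_iff _ _ _ _).mp h2 with ⟨h, _⟩ | ⟨h, _⟩
    · exact h
    · exact absurd h one_ne_zero
  -- injectivity of w ↦ l z w
  have injL : ∀ z : ι, Function.Injective (fun w => l z w) := by
    intro z w1 w2 h
    dsimp at h
    have e1 := hcl z w1
    have e2 := hcl z w2
    rw [h] at e1
    have e3 : B (l z w2) = (c z w2)⁻¹ • (B z * B w2) := by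
      rw [e2, smul_smul, inv_mul_cancel₀ (hcne z w2), one_smul]
    rw [e3, smul_smul, ← mul_smul_comm] at e1
    have := mul_left_cancel₀ (hBne z) e1
    exact scal w1 w2 _ this
  -- injectivity of w ↦ l w f
  have injR : ∀ f : ι, Function.Injective (fun w => l w f) := by
    intro f w1 w2 h
    dsimp at h
    have e1 := hcl w1 f
    have e2 := hcl w2 f
    rw [h] at e1
    have e3 : B (l w2 f) = (c w2 f)⁻¹ • (B w2 * B f) := by
      rw [e2, smul_smul, inv_mul_cancel₀ (hcne w2 f), one_smul]
    rw [e3, smul_smul, ← smul_mul_assoc] at e1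
    have := mul_right_cancel₀ (hBne f) e1
    exact scal w1 w2 _ this
  have surjL : ∀ z : ι, Function.Surjective (fun w => l z w) :=
    fun z => Finite.injective_iff_surjective.mp (injL z)
  have surjR : ∀ f : ι, Function.Surjective (fun w => l w f) :=
    fun f => Finite.injective_iff_surjective.mp (injR f)
  constructor
  · intro f w z
    obtain ⟨w₀, hw₀⟩ := surjL z f
    dsimp at hw₀
    have e : B z * B w₀ = c z w₀ • B f := by rw [hcl z w₀, hw₀]
    have key : (B f)⁻¹ * B z = c z w₀ • B' w₀ := by
      have h1 : (B f)⁻¹ * B z = (B f)⁻¹ * (B z * B w₀) * (B w₀)⁻¹ := by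
        rw [mul_assoc ((B f)⁻¹), mul_assoc, mul_inv_cancel₀ (hBne w₀), mul_one]
      rw [h1, e, mul_smul_comm, inv_mul_cancel₀ (hBne f), smul_mul_assoc,
        one_mul, hB']
    rw [hcl z w, key, map_smul, map_smul, Module.Basis.coord_apply, Module.Basis.coord_apply,
      B.repr_self, B'.repr_self, smul_eq_mul, smul_eq_mul,
      Finsupp.single_apply, Finsupp.single_apply]
    by_cases hw : w = w₀
    · subst hw
      rw [if_pos hw₀, if_pos rfl]
    · rw [if_neg (fun h => hw (injL z (h.trans hw₀.symm))),
        if_neg (fun h => hw h.symm), mul_zero, mul_zero]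
  · intro f w z
    obtain ⟨w₀, hw₀⟩ := surjR f z
    dsimp at hw₀
    have e : B w₀ * B f = c w₀ f • B z := by rw [hcl w₀ f, hw₀]
    have key : B f * (B z)⁻¹ = c w₀ f • B' w₀ := by
      have h1 : B f * (B z)⁻¹ = (B w₀)⁻¹ * (B w₀ * B f) * (B z)⁻¹ := by
        rw [← mul_assoc, inv_mul_cancel₀ (hBne w₀), one_mul]
      rw [h1, e, mul_smul_comm, smul_mul_assoc, mul_assoc,
        mul_inv_cancel₀ (hBne z), mul_one, hB']
    rw [hcl w f, key, map_smul, map_smul, Module.Basis.coord_apply, Module.Basis.coord_apply,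
      B.repr_self, B'.repr_self, smul_eq_mul, smul_eq_mul,
      Finsupp.single_apply, Finsupp.single_apply]
    by_cases hw : w = w₀
    · subst hw
      rw [if_pos hw₀, if_pos rfl]
    · rw [if_neg (fun h => hw (injR f (h.trans hw₀.symm))),
        if_neg (fun h => hw h.symm), mul_zero, mul_zero]
end

section
/- Let F ⊆ F₁ ⊆ F₂ be a tower of fields with F₁ finite-dimensional over F and F₂ finite-dimensional over F₁, let L₁ be an F-basis of F₁ and L₂ an F₁-basis of F₂, so that the products {x·y : x ∈ L₁, y ∈ L₂} (indexed by L₁ × L₂) form an F-basis of F₂. If L₁ satisfies condition (2.1) over F and L₂ satisfies condition (2.1) over F₁, then the product basis satisfies condition (2.1) over F: for all f₁, w₁, z₁ ∈ L₁ and f₂, w₂, z₂ ∈ L₂, (f₁f₂)*((w₁w₂)⁻¹·(z₁z₂)) = (w₁w₂)*((z₁z₂)·(f₁f₂)⁻¹), where ( )* denotes coordinate functionals of the product basis. -/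
/-- Condition (2.1) passes to product bases in a tower of fields: if `L₁` is an
`F`-basis of `F₁` satisfying (2.1) and `L₂` is an `F₁`-basis of `F₂` satisfying
(2.1), then the product `F`-basis `{x·y : x ∈ L₁, y ∈ L₂}` of `F₂` satisfies
(2.1). -/
theorem product_basis_satisfies_2_1
    (F F₁ F₂ : Type*) [Field F] [Field F₁] [Field F₂]
    [Algebra F F₁] [Algebra F₁ F₂] [Algebra F F₂] [IsScalarTower F F₁ F₂]
    [FiniteDimensional F F₁] [FiniteDimensional F₁ F₂]
    {ι₁ ι₂ : Type*} (B₁ : Module.Basis ι₁ F F₁) (B₂ : Module.Basis ι₂ F₁ F₂)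
    (B : Module.Basis (ι₁ × ι₂) F F₂)
    (hB : ∀ (x : ι₁) (y : ι₂), B (x, y) = algebraMap F₁ F₂ (B₁ x) * B₂ y)
    (h1 : ∀ f w z : ι₁, B₁.coord f ((B₁ w)⁻¹ * B₁ z) = B₁.coord w (B₁ z * (B₁ f)⁻¹))
    (h2 : ∀ f w z : ι₂, B₂.coord f ((B₂ w)⁻¹ * B₂ z) = B₂.coord w (B₂ z * (B₂ f)⁻¹)) :
    ∀ f w z : ι₁ × ι₂, B.coord f ((B w)⁻¹ * B z) = B.coord w (B z * (B f)⁻¹) := by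
  have key : ∀ (a : ι₁) (b : ι₂) (t : F₂),
      B.coord (a, b) t = B₁.coord a (B₂.coord b t) := by
    classical
    intro a b t
    have heq : B.coord (a, b) =
        (B₁.coord a).comp ((B₂.coord b).restrictScalars F) := by
      apply B.ext
      rintro ⟨x, y⟩
      have lhs : B.coord (a, b) (B (x, y)) = if (x, y) = (a, b) then 1 else 0 := by
        simp [Module.Basis.coord_apply, Module.Basis.repr_self, Finsupp.single_apply,
          @eq_comm _ (a, b)]
      rw [lhs, hB]
      have : (algebraMap F₁ F₂) (B₁ x) * B₂ y = B₁ x • B₂ y := by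
        rw [Algebra.smul_def]
      simp only [LinearMap.comp_apply, LinearMap.restrictScalars_apply, this,
        map_smul, Module.Basis.coord_apply, Module.Basis.repr_self, Finsupp.single_apply,
        smul_eq_mul, Prod.ext_iff]
      by_cases hy : y = b <;> by_cases hx : x = a <;>
        simp [hx, hy, Finsupp.single_apply]
    rw [heq]; rfl
  have h1' : ∀ (f w : ι₁) (c : F₁),
      B₁.coord f ((B₁ w)⁻¹ * c) = B₁.coord w (c * (B₁ f)⁻¹) := by
    intro f w c
    have : (B₁.coord f).comp (LinearMap.mulLeft F (B₁ w)⁻¹) =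
        (B₁.coord w).comp (LinearMap.mulRight F (B₁ f)⁻¹) := by
      apply B₁.ext
      intro z
      simpa using h1 f w z
    exact DFunLike.congr_fun this c
  rintro ⟨f₁, f₂⟩ ⟨w₁, w₂⟩ ⟨z₁, z₂⟩
  have e1 : ((algebraMap F₁ F₂) (B₁ w₁) * B₂ w₂)⁻¹ *
      ((algebraMap F₁ F₂) (B₁ z₁) * B₂ z₂) =
      ((B₁ w₁)⁻¹ * B₁ z₁) • ((B₂ w₂)⁻¹ * B₂ z₂) := by
    rw [mul_inv, ← map_inv₀, Algebra.smul_def, map_mul]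
    ring
  have e2 : ((algebraMap F₁ F₂) (B₁ z₁) * B₂ z₂) *
      ((algebraMap F₁ F₂) (B₁ f₁) * B₂ f₂)⁻¹ =
      (B₁ z₁ * (B₁ f₁)⁻¹) • (B₂ z₂ * (B₂ f₂)⁻¹) := by
    rw [mul_inv, ← map_inv₀, Algebra.smul_def, map_mul]
    ring
  have i1 : B₂.coord f₂ (((B₁ w₁)⁻¹ * B₁ z₁) • ((B₂ w₂)⁻¹ * B₂ z₂)) =
      ((B₁ w₁)⁻¹ * B₁ z₁) * B₂.coord f₂ ((B₂ w₂)⁻¹ * B₂ z₂) := by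
    rw [map_smul, smul_eq_mul]
  have i2 : B₂.coord w₂ ((B₁ z₁ * (B₁ f₁)⁻¹) • (B₂ z₂ * (B₂ f₂)⁻¹)) =
      (B₁ z₁ * (B₁ f₁)⁻¹) * B₂.coord w₂ (B₂ z₂ * (B₂ f₂)⁻¹) := by
    rw [map_smul, smul_eq_mul]
  rw [key, key, hB, hB, hB, e1, e2, i1, i2, h2 f₂ w₂ z₂]
  set A := B₂.coord w₂ (B₂ z₂ * (B₂ f₂)⁻¹) with hA
  have r1 : (B₁ w₁)⁻¹ * B₁ z₁ * A = (B₁ w₁)⁻¹ * (B₁ z₁ * A) := by ring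
  have r2 : B₁ z₁ * (B₁ f₁)⁻¹ * A = (B₁ z₁ * A) * (B₁ f₁)⁻¹ := by ring
  rw [r1, r2]
  exact h1' f₁ w₁ (B₁ z₁ * A)
end

section
/- Let F ⊆ F₁ ⊆ F₂ be a tower of fields with F₁ finite-dimensional over F and F₂ finite-dimensional over F₁, let L₁ be an F-basis of F₁ and L₂ an F₁-basis of F₂ such that the inverse families (x⁻¹)_{x ∈ L₁} and (y⁻¹)_{y ∈ L₂} are again bases of F₁ over F and of F₂ over F₁, respectively. If L₁ satisfies conditions (2.2) and (2.3) over F and L₂ satisfies conditions (2.2) and (2.3) over F₁, then the family ((x·y)⁻¹)_{(x,y) ∈ L₁ × L₂} = (x⁻¹·y⁻¹) is an F-basis of F₂, and the product F-basis {x·y : x ∈ L₁, y ∈ L₂} of F₂ satisfies conditions (2.2) and (2.3) over F. -/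
/-- Conditions (2.2) and (2.3) pass to product bases in a tower of fields: if
`L₁` is an `F`-basis of `F₁` and `L₂` an `F₁`-basis of `F₂`, both of whose
families of inverses are again bases, and both satisfy (2.2) and (2.3), then
the family of inverses of the product basis `{x·y}` is again an `F`-basis of
`F₂` and the product basis satisfies (2.2) and (2.3). -/
theorem product_basis_satisfies_2_2_and_2_3
    (F F₁ F₂ : Type*) [Field F] [Field F₁] [Field F₂]
    [Algebra F F₁] [Algebra F₁ F₂] [Algebra F F₂] [IsScalarTower F F₁ F₂]
    [FiniteDimensional F F₁] [FiniteDimensional F₁ F₂]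
    {ι₁ ι₂ : Type*} (B₁ : Module.Basis ι₁ F F₁) (B₂ : Module.Basis ι₂ F₁ F₂)
    (B₁' : Module.Basis ι₁ F F₁) (hB₁' : ∀ x : ι₁, B₁' x = (B₁ x)⁻¹)
    (B₂' : Module.Basis ι₂ F₁ F₂) (hB₂' : ∀ y : ι₂, B₂' y = (B₂ y)⁻¹)
    (B : Module.Basis (ι₁ × ι₂) F F₂)
    (hB : ∀ (x : ι₁) (y : ι₂), B (x, y) = algebraMap F₁ F₂ (B₁ x) * B₂ y)
    (h22₁ : ∀ f w z : ι₁, B₁.coord f (B₁ z * B₁ w) = B₁'.coord w ((B₁ f)⁻¹ * B₁ z))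
    (h23₁ : ∀ f w z : ι₁, B₁.coord z (B₁ w * B₁ f) = B₁'.coord w (B₁ f * (B₁ z)⁻¹))
    (h22₂ : ∀ f w z : ι₂, B₂.coord f (B₂ z * B₂ w) = B₂'.coord w ((B₂ f)⁻¹ * B₂ z))
    (h23₂ : ∀ f w z : ι₂, B₂.coord z (B₂ w * B₂ f) = B₂'.coord w (B₂ f * (B₂ z)⁻¹)) :
    ∃ B' : Module.Basis (ι₁ × ι₂) F F₂,
      (∀ p : ι₁ × ι₂, B' p = (B p)⁻¹) ∧
      (∀ f w z : ι₁ × ι₂, B.coord f (B z * B w) = B'.coord w ((B f)⁻¹ * B z)) ∧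
      (∀ f w z : ι₁ × ι₂, B.coord z (B w * B f) = B'.coord w (B f * (B z)⁻¹)) := by
  -- identify `B` with the `smulTower` product basis
  have hBeq : B = B₁.smulTower B₂ := by
    apply Module.Basis.eq_of_apply_eq
    rintro ⟨x, y⟩
    rw [Module.Basis.smulTower_apply, Algebra.smul_def, hB]
  -- generalized versions of (2.2) and (2.3) for B₁ (linear extension in one slot)
  have g22 : ∀ (f w : ι₁) (v : F₁),
      B₁.coord f (v * B₁ w) = B₁'.coord w ((B₁ f)⁻¹ * v) := by
    intro f w v
    have : (B₁.coord f).comp (LinearMap.mulRight F (B₁ w)) =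
        (B₁'.coord w).comp (LinearMap.mulLeft F ((B₁ f)⁻¹)) :=
      Module.Basis.ext B₁ fun z => by simpa using h22₁ f w z
    simpa using LinearMap.congr_fun this v
  have g23 : ∀ (w z : ι₁) (v : F₁),
      B₁.coord z (B₁ w * v) = B₁'.coord w (v * (B₁ z)⁻¹) := by
    intro w z v
    have : (B₁.coord z).comp (LinearMap.mulLeft F (B₁ w)) =
        (B₁'.coord w).comp (LinearMap.mulRight F ((B₁ z)⁻¹)) :=
      Module.Basis.ext B₁ fun f => by simpa using h23₁ f w z
    simpa using LinearMap.congr_fun this v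
  refine ⟨B₁'.smulTower B₂', ?_, ?_, ?_⟩
  · rintro ⟨x, y⟩
    rw [Module.Basis.smulTower_apply, Algebra.smul_def, hB, hB₁', hB₂', mul_inv, map_inv₀]
  · rintro ⟨f₁, f₂⟩ ⟨w₁, w₂⟩ ⟨z₁, z₂⟩
    subst hBeq
    simp only [Module.Basis.smulTower_apply, Algebra.smul_def, Module.Basis.coord_apply,
      Module.Basis.smulTower_repr_mk]
    rw [show (algebraMap F₁ F₂ (B₁ z₁) * B₂ z₂) * (algebraMap F₁ F₂ (B₁ w₁) * B₂ w₂)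
          = algebraMap F₁ F₂ (B₁ z₁ * B₁ w₁) * (B₂ z₂ * B₂ w₂) by rw [map_mul]; ring,
        show (algebraMap F₁ F₂ (B₁ f₁) * B₂ f₂)⁻¹ * (algebraMap F₁ F₂ (B₁ z₁) * B₂ z₂)
          = algebraMap F₁ F₂ ((B₁ f₁)⁻¹ * B₁ z₁) * ((B₂ f₂)⁻¹ * B₂ z₂) by
        rw [map_mul, map_inv₀, mul_inv]; ring,
        ← Algebra.smul_def, ← Algebra.smul_def, map_smul, map_smul]
    simp only [Finsupp.smul_apply, smul_eq_mul]
    rw [show B₂.repr (B₂ z₂ * B₂ w₂) f₂ = B₂'.repr ((B₂ f₂)⁻¹ * B₂ z₂) w₂ from h22₂ f₂ w₂ z₂]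
    rw [show (B₁ z₁ * B₁ w₁) * B₂'.repr ((B₂ f₂)⁻¹ * B₂ z₂) w₂
          = (B₂'.repr ((B₂ f₂)⁻¹ * B₂ z₂) w₂ * B₁ z₁) * B₁ w₁ by ring]
    have h := g22 f₁ w₁ (B₂'.repr ((B₂ f₂)⁻¹ * B₂ z₂) w₂ * B₁ z₁)
    simp only [Module.Basis.coord_apply] at h
    rw [h]
    congr 1
    ring
  · rintro ⟨f₁, f₂⟩ ⟨w₁, w₂⟩ ⟨z₁, z₂⟩
    subst hBeq
    simp only [Module.Basis.smulTower_apply, Algebra.smul_def, Module.Basis.coord_apply,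
      Module.Basis.smulTower_repr_mk]
    rw [show (algebraMap F₁ F₂ (B₁ w₁) * B₂ w₂) * (algebraMap F₁ F₂ (B₁ f₁) * B₂ f₂)
          = algebraMap F₁ F₂ (B₁ w₁ * B₁ f₁) * (B₂ w₂ * B₂ f₂) by rw [map_mul]; ring,
        show (algebraMap F₁ F₂ (B₁ f₁) * B₂ f₂) * (algebraMap F₁ F₂ (B₁ z₁) * B₂ z₂)⁻¹
          = algebraMap F₁ F₂ (B₁ f₁ * (B₁ z₁)⁻¹) * (B₂ f₂ * (B₂ z₂)⁻¹) by
        rw [map_mul, map_inv₀, mul_inv]; ring,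
        ← Algebra.smul_def, ← Algebra.smul_def, map_smul, map_smul]
    simp only [Finsupp.smul_apply, smul_eq_mul]
    rw [show B₂.repr (B₂ w₂ * B₂ f₂) z₂ = B₂'.repr (B₂ f₂ * (B₂ z₂)⁻¹) w₂ from h23₂ f₂ w₂ z₂]
    rw [show (B₁ w₁ * B₁ f₁) * B₂'.repr (B₂ f₂ * (B₂ z₂)⁻¹) w₂
          = B₁ w₁ * (B₁ f₁ * B₂'.repr (B₂ f₂ * (B₂ z₂)⁻¹) w₂) by ring]
    have h := g23 w₁ z₁ (B₁ f₁ * B₂'.repr (B₂ f₂ * (B₂ z₂)⁻¹) w₂)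
    simp only [Module.Basis.coord_apply] at h
    rw [h]
    congr 1
    ring
end

section
/- Let F be a field and D a division ring containing F in its center and finite-dimensional over F, and let L be an F-basis of D such that the family of inverses (w⁻¹)_{w ∈ L} is also an F-basis of D. Suppose L satisfies condition (2.2): f*(z·w) = (w⁻¹)*(f⁻¹·z) for all f, w, z ∈ L. Then for all r, v ∈ L one has ∑_{t ∈ L} r*(v·t)·t⁻¹ = r⁻¹·v in D. -/
/-- Equation (2.4): if an `F`-basis `L` of a finite-dimensional division
`F`-algebra `D`, whose family of inverses is again an `F`-basis, satisfies
condition (2.2), then for all `r, v ∈ L` we have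
`∑_{t ∈ L} r*(v·t)·t⁻¹ = r⁻¹·v`. -/
theorem sum_coord_mul_inv_eq
    (F : Type*) [Field F] (D : Type*) [DivisionRing D] [Algebra F D]
    [FiniteDimensional F D] {ι : Type*} [Fintype ι] (B : Module.Basis ι F D)
    (B' : Module.Basis ι F D) (hB' : ∀ w : ι, B' w = (B w)⁻¹)
    (h22 : ∀ f w z : ι, B.coord f (B z * B w) = B'.coord w ((B f)⁻¹ * B z)) :
    ∀ r v : ι, ∑ t : ι, B.coord r (B v * B t) • (B t)⁻¹ = (B r)⁻¹ * B v := by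
  intro r v
  calc ∑ t : ι, B.coord r (B v * B t) • (B t)⁻¹
      = ∑ t : ι, B'.coord t ((B r)⁻¹ * B v) • B' t := by
        refine Finset.sum_congr rfl fun t _ => ?_
        rw [h22 r t v, hB' t]
    _ = (B r)⁻¹ * B v := B'.sum_repr _
end

section
/- Let F be a field, D a division ring containing F in its center and finite-dimensional over F, and L an F-basis of D with 1 ∈ L and satisfying condition (2.1). Let (N_a)_{a ∈ A} be a family of F-vector spaces and let N_in = ⊕_{a ∈ A} (D ⊗_F N_a), which is a left D-module via d·(d' ⊗ n) = (d·d') ⊗ n on each summand. For r ∈ L and a ∈ A let π_{r,a} : N_in → N_a be the composite of the canonical projection onto the summand D ⊗_F N_a with the F-linear map r* ⊗ id_{N_a}. Then for every r ∈ L, every a ∈ A and every m ∈ N_in one has π_{1,a}(r⁻¹·m) = π_{r,a}(m). -/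
open TensorProduct DirectSum

/-- Lemma 2.3 (Lemma `lem2` of the paper): with `N_in = ⊕ₐ (D ⊗_F N_a)` and the
projections `π_{r,a} : N_in → N_a` given by the coordinate functional of the
basis `L` at `r` on the tensor factor `D`, one has
`π_{1,a}(r⁻¹ · m) = π_{r,a}(m)` for all `r ∈ L`, `a` and `m ∈ N_in`,
provided `1 ∈ L` and `L` satisfies condition (2.1). -/
theorem pi_one_smul_inv_eq_pi
    (F : Type*) [Field F] (D : Type*) [DivisionRing D] [Algebra F D]
    [FiniteDimensional F D] {ι : Type*} (B : Module.Basis ι F D)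
    (i₀ : ι) (hi₀ : B i₀ = 1)
    (h21 : ∀ f w z : ι, B.coord f ((B w)⁻¹ * B z) = B.coord w (B z * (B f)⁻¹))
    (A : Type*) (N : A → Type*) [∀ a, AddCommGroup (N a)] [∀ a, Module F (N a)]
    (r : ι) (a : A) (m : ⨁ a, D ⊗[F] N a) :
    (TensorProduct.lift ((LinearMap.lsmul F (N a)).comp (B.coord i₀)))
        ((DirectSum.component D A (fun a => D ⊗[F] N a) a) ((B r)⁻¹ • m))
      = (TensorProduct.lift ((LinearMap.lsmul F (N a)).comp (B.coord r)))
        ((DirectSum.component D A (fun a => D ⊗[F] N a) a) m) := by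
  have key : ∀ d : D, B.coord i₀ ((B r)⁻¹ * d) = B.coord r d := by
    have : (B.coord i₀).comp (LinearMap.mulLeft F (B r)⁻¹) = B.coord r := by
      apply B.ext
      intro z
      simp only [LinearMap.comp_apply, LinearMap.mulLeft_apply]
      rw [h21 i₀ r z, hi₀, inv_one, mul_one]
    intro d
    simpa using congrArg (fun f => f d) this
  rw [map_smul]
  generalize (DirectSum.component D A (fun a => D ⊗[F] N a) a) m = x
  induction x using TensorProduct.induction_on with
  | zero => simp
  | tmul d n =>
      rw [TensorProduct.smul_tmul']
      simp only [TensorProduct.lift.tmul, LinearMap.comp_apply, LinearMap.lsmul_apply,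
        smul_eq_mul, key]
  | add x y hx hy => simp [smul_add, hx, hy]
end
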